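/- arXiv:1804.09563 — 8 statements merged into one kernel-verified Lean document; each statement's English description precedes it below -/
import Mathlib

section
/- Let θ be a 2×2 real matrix and D a derivation of the Lie algebra g_θ such that the range of D is contained in {0} × ℝ². Let D* : ℝ² → ℝ² be the linear map determined by D(0,v) = (0, D*v). Then D* ∘ θ = θ ∘ D* (θ viewed as a linear endomorphism of ℝ²), and consequently D* commutes with exp(tθ) for every t ∈ ℝ. -/
open Matrix

noncomputable section

/-- The matrix exponential of a `2 × 2` real matrix. -/
def expm (A : Matrix (Fin 2) (Fin 2) ℝ) : Matrix (Fin 2) (Fin 2) ℝ := NormedSpace.exp A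

/-- The bracket of the Lie algebra `g_θ = ℝ ×_θ ℝ²`:
`[(a,u),(b,v)] = (0, aθv − bθu)`. -/
def br (θ : Matrix (Fin 2) (Fin 2) ℝ) (x y : ℝ × (Fin 2 → ℝ)) : ℝ × (Fin 2 → ℝ) :=
  (0, x.1 • θ.mulVec y.2 - y.1 • θ.mulVec x.2)

/-- If `D` is a derivation of `g_θ` with range contained in `{0} × ℝ²`, and
`D* : ℝ² → ℝ²` is the linear map determined by `D(0,v) = (0, D*v)`, then `D* ∘ θ = θ ∘ D*`, and
consequently `D*` commutes with `exp(tθ)` for every `t`. -/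
theorem Dstar_commutes (θ : Matrix (Fin 2) (Fin 2) ℝ)
    (D : (ℝ × (Fin 2 → ℝ)) →ₗ[ℝ] (ℝ × (Fin 2 → ℝ)))
    (hder : ∀ x y : ℝ × (Fin 2 → ℝ), D (br θ x y) = br θ (D x) y + br θ x (D y))
    (hrange : ∀ x : ℝ × (Fin 2 → ℝ), (D x).1 = 0)
    (Dstar : (Fin 2 → ℝ) →ₗ[ℝ] (Fin 2 → ℝ))
    (hDstar : ∀ v : Fin 2 → ℝ, D ((0, v) : ℝ × (Fin 2 → ℝ)) = (0, Dstar v)) :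
    (∀ v : Fin 2 → ℝ, Dstar (θ.mulVec v) = θ.mulVec (Dstar v)) ∧
    (∀ (t : ℝ) (v : Fin 2 → ℝ),
      Dstar ((expm (t • θ)).mulVec v) = (expm (t • θ)).mulVec (Dstar v)) := by

  have key : ∀ v : Fin 2 → ℝ, Dstar (θ.mulVec v) = θ.mulVec (Dstar v) := by
    intro v
    have h := hder (1, 0) (0, v)
    have hx : D ((1, 0) : ℝ × (Fin 2 → ℝ)) = (0, (D (1, 0)).2) := by
      ext
      · exact hrange _
      · rfl
    rw [hx, hDstar] at h
    simp [br, Matrix.mulVec_zero] at h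
    have h2 := congrArg Prod.snd h
    simpa [hDstar] using h2
  refine ⟨key, ?_⟩
  intro t v
  set M := LinearMap.toMatrix' Dstar with hMdef
  have hM : ∀ w : Fin 2 → ℝ, Dstar w = M.mulVec w := by
    intro w
    rw [hMdef, ← Matrix.toLin'_apply, Matrix.toLin'_toMatrix']
  have hMθ : M * θ = θ * M := by
    apply Matrix.toLin'.injective
    refine LinearMap.ext fun w => ?_
    rw [Matrix.toLin'_apply, Matrix.toLin'_apply, ← Matrix.mulVec_mulVec,
      ← Matrix.mulVec_mulVec, ← hM, ← hM, key]
  have hc : Commute (t • θ) M := ((Commute.symm hMθ).smul_left t)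
  have hce : Commute (expm (t • θ)) M := by
    unfold expm
    exact hc.exp_left
  rw [hM, hM, Matrix.mulVec_mulVec, Matrix.mulVec_mulVec, hce]
end
end

section
/- Let θ be either the matrix [[1,1],[0,1]] or the matrix [[1,0],[0,λ]] with 0 < |λ| < 1, and let D be a derivation of the Lie algebra g_θ whose range is contained in {0} × ℝ². Then every complex eigenvalue of D is real; equivalently, the characteristic polynomial of D splits into linear factors over ℝ. (In the first case the induced map D* on ℝ² has the form [[α,β],[0,α]], and in the second case it is diagonal.) -/
open Matrix Polynomial

noncomputable section

/-- The obvious linear equivalence `ℝ × (Fin 2 → ℝ) ≃ₗ[ℝ] (Fin 3 → ℝ)`. -/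
def eqv : (ℝ × (Fin 2 → ℝ)) ≃ₗ[ℝ] (Fin 3 → ℝ) where
  toFun x := Fin.cons x.1 x.2
  invFun f := (f 0, fun i => f i.succ)
  map_add' x y := by funext i; refine Fin.cases ?_ (fun j => ?_) i <;> simp
  map_smul' c x := by funext i; refine Fin.cases ?_ (fun j => ?_) i <;> simp
  left_inv x := by ext <;> simp
  right_inv f := by funext i; refine Fin.cases ?_ (fun j => ?_) i <;> simp

@[simp] lemma eqv_apply (x : ℝ × (Fin 2 → ℝ)) : eqv x = Fin.cons x.1 x.2 := rfl
@[simp] lemma eqv_symm_apply (f : Fin 3 → ℝ) : eqv.symm f = (f 0, fun i => f i.succ) := rfl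

/-- Let `θ = [[1,1],[0,1]]` (the case `r₃`) or `θ = [[1,0],[0,λ]]` with
`0 < |λ| < 1` (the case `r_{3,λ}`), and let `D` be a derivation of `g_θ` with range contained in
`{0} × ℝ²`.  Then every complex eigenvalue of `D` is real, i.e. the characteristic polynomial of
`D` splits over `ℝ`. -/
theorem derivation_real_eigenvalues (θ : Matrix (Fin 2) (Fin 2) ℝ)
    (hθ : θ = !![1, 1; 0, 1] ∨ ∃ l : ℝ, 0 < |l| ∧ |l| < 1 ∧ θ = !![1, 0; 0, l])
    (D : (ℝ × (Fin 2 → ℝ)) →ₗ[ℝ] (ℝ × (Fin 2 → ℝ)))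
    (hder : ∀ x y : ℝ × (Fin 2 → ℝ), D (br θ x y) = br θ (D x) y + br θ x (D y))
    (hrange : ∀ x : ℝ × (Fin 2 → ℝ), (D x).1 = 0) :
    ((LinearMap.charpoly D).map (RingHom.id ℝ)).Splits := by
  classical
  set b : Module.Basis (Fin 3) ℝ (ℝ × (Fin 2 → ℝ)) := (Pi.basisFun ℝ (Fin 3)).map eqv.symm with hb
  set M := LinearMap.toMatrix b b D with hMdef
  have hM : ∀ i j, M i j = (eqv (D (eqv.symm (Pi.single j 1)))) i := by
    intro i j
    simp [hMdef, LinearMap.toMatrix_apply, hb, Module.Basis.map_apply, Module.Basis.map_repr,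
      Pi.basisFun_apply, Pi.basisFun_repr]
  -- the first row of `M` vanishes since the range of `D` lies in `{0} × ℝ²`
  have h0 : ∀ j, M 0 j = 0 := by
    intro j
    rw [hM]
    simpa using hrange (eqv.symm (Pi.single j 1))
  -- the induced map on `ℝ²` commutes with `θ`
  have hcom : ∀ v : Fin 2 → ℝ, (D (0, θ.mulVec v)).2 = θ.mulVec (D (0, v)).2 := by
    intro v
    have h := hder (1, 0) (0, v)
    have h1 := hrange (1, 0)
    have h2 := hrange (0, v)
    have := congrArg Prod.snd h
    simpa [br, h1, h2, Matrix.mulVec_zero] using this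
  -- `θ` fixes the first standard basis vector, in both cases
  have hfix : θ.mulVec (Pi.single 0 1) = Pi.single 0 1 := by
    rcases hθ with h | ⟨l, _, _, h⟩ <;> subst h <;> funext i <;> fin_cases i <;>
      simp [Matrix.mulVec, dotProduct, Fin.sum_univ_two, Pi.single_apply]
  -- hence `(D (0, e₀)).2 = θ.mulVec (D (0, e₀)).2`
  have hkey : (D (0, Pi.single 0 1)).2 = θ.mulVec (D (0, Pi.single 0 1)).2 := by
    have := hcom (Pi.single 0 1)
    rwa [hfix] at this
  -- the `(1,0)` entry of the induced map vanishes
  have hE : (D (0, (Pi.single 0 1 : Fin 2 → ℝ))).2 1 = 0 := by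
    set u := (D (0, (Pi.single 0 1 : Fin 2 → ℝ))).2 with hu
    rcases hθ with h | ⟨l, _, hl1, h⟩
    · -- component 0 : u 0 = u 0 + u 1
      have := congrFun hkey 0
      rw [h] at this
      simp [Matrix.mulVec, dotProduct, Fin.sum_univ_two, ← hu] at this
      linarith
    · -- component 1 : u 1 = l * u 1 with l ≠ 1
      have := congrFun hkey 1
      rw [h] at this
      simp [Matrix.mulVec, dotProduct, Fin.sum_univ_two, ← hu] at this
      have hlne : l ≠ 1 := by
        intro hl; rw [hl] at hl1; simp at hl1
      have h2 : (1 - l) * u 1 = 0 := by linarith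
      rcases mul_eq_zero.mp h2 with h3 | h3
      · exact absurd (by linarith : l = 1) hlne
      · exact h3
  -- hence the `(2,1)` entry of `M` vanishes
  have hsym : eqv.symm (Pi.single (1 : Fin 3) 1) = ((0 : ℝ), (Pi.single 0 1 : Fin 2 → ℝ)) := by
    refine Prod.ext ?_ ?_
    · simp [Pi.single_apply]
    · funext i
      fin_cases i <;> simp [Pi.single_apply]
  have h21 : M 2 1 = 0 := by
    rw [hM, hsym]
    rw [eqv_apply, show (2 : Fin 3) = Fin.succ 1 from rfl, Fin.cons_succ]
    exact hE
  -- compute the characteristic polynomial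
  have hcp : LinearMap.charpoly D = M.charpoly := (LinearMap.charpoly_toMatrix D b).symm
  have hfac : M.charpoly = X * ((X - C (M 1 1)) * (X - C (M 2 2))) := by
    rw [Matrix.charpoly, Matrix.det_fin_three]
    simp [Matrix.charmatrix_apply, h0 0, h0 1, h0 2, h21]
    ring
  rw [Polynomial.map_id, hcp, hfac]
  exact Splits.mul Splits.X (Splits.mul (Splits.X_sub_C _) (Splits.X_sub_C _))
end
end

section
/- Let λ ∈ ℝ and θ = [[λ,−1],[1,λ]]. If D is a derivation of the Lie algebra g_θ whose range is contained in {0} × ℝ², then the induced linear map D* : ℝ² → ℝ² (determined by D(0,v) = (0,D*v)) has the form [[α,−β],[β,α]] for some real numbers α, β. -/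
open Matrix

noncomputable section

/-- Let `λ ∈ ℝ` and `θ = [[λ,−1],[1,λ]]` (the Lie algebras `e` and
`r'_{3,λ}`).  If `D` is a derivation of `g_θ` whose range is contained in `{0} × ℝ²`, then the
induced map `D* : ℝ² → ℝ²` (determined by `D(0,v) = (0,D*v)`) has the form `[[α,−β],[β,α]]`. -/
theorem Dstar_conformal (l : ℝ) (θ : Matrix (Fin 2) (Fin 2) ℝ) (hθ : θ = !![l, -1; 1, l])
    (D : (ℝ × (Fin 2 → ℝ)) →ₗ[ℝ] (ℝ × (Fin 2 → ℝ)))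
    (hder : ∀ x y : ℝ × (Fin 2 → ℝ), D (br θ x y) = br θ (D x) y + br θ x (D y))
    (hrange : ∀ x : ℝ × (Fin 2 → ℝ), (D x).1 = 0)
    (Dstar : (Fin 2 → ℝ) →ₗ[ℝ] (Fin 2 → ℝ))
    (hDstar : ∀ v : Fin 2 → ℝ, D ((0, v) : ℝ × (Fin 2 → ℝ)) = (0, Dstar v)) :
    ∃ α β : ℝ, Dstar = Matrix.mulVecLin !![α, -β; β, α] := by
  have hcomm : ∀ v, Dstar (θ.mulVec v) = θ.mulVec (Dstar v) := by
    intro v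
    have h := hder (1, 0) (0, v)
    simp only [br, one_smul, zero_smul, sub_zero, smul_zero, zero_sub, hrange, hDstar] at h
    have h2 := congrArg Prod.snd h
    simpa using h2
  set a := Dstar (Pi.single 0 1) with ha
  set c := Dstar (Pi.single 1 1) with hc
  have key := hcomm (Pi.single 0 1)
  have hθs : θ.mulVec (Pi.single 0 1) = l • (Pi.single 0 1 : Fin 2 → ℝ) + (Pi.single 1 1 : Fin 2 → ℝ) := by
    subst hθ
    funext j
    fin_cases j <;> simp [Matrix.mulVec, dotProduct, Fin.sum_univ_two]
  rw [hθs, map_add, _root_.map_smul] at key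
  have hc0 : c 0 = -(a 1) := by
    have := congrFun key 0
    subst hθ
    simp [Matrix.mulVec, dotProduct, Fin.sum_univ_two, ← ha, ← hc] at this
    linarith
  have hc1 : c 1 = a 0 := by
    have := congrFun key 1
    subst hθ
    simp [Matrix.mulVec, dotProduct, Fin.sum_univ_two, ← ha, ← hc] at this
    linarith
  refine ⟨a 0, a 1, ?_⟩
  apply Module.Basis.ext (Pi.basisFun ℝ (Fin 2))
  intro i
  fin_cases i <;> funext j <;> fin_cases j <;>
    simp [Pi.basisFun_apply, Matrix.mulVecLin_apply, Matrix.mulVec, dotProduct,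
      Fin.sum_univ_two, ← ha, ← hc, hc0, hc1]
end
end

section
/- Let λ ∈ ℝ and θ = [[λ,−1],[1,λ]]. Every two-dimensional Lie subalgebra h of the Lie algebra g_θ equals {0} × ℝ²; that is, if h ⊆ g_θ is a Lie subalgebra with dim h = 2 then h = {0} × ℝ². -/
open Matrix

noncomputable section

lemma no_real_eigenvector (l c : ℝ) (w : Fin 2 → ℝ)
    (hw : (!![l, -1; 1, l]).mulVec w = c • w) : w = 0 := by
  have h0 := congrFun hw 0
  have h1 := congrFun hw 1
  simp [Matrix.mulVec, dotProduct, Fin.sum_univ_two] at h0 h1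
  funext i
  fin_cases i <;> simp <;> nlinarith [sq_nonneg (l - c), sq_nonneg (w 0), sq_nonneg (w 1)]

/-- Let `λ ∈ ℝ` and `θ = [[λ,−1],[1,λ]]`.  Every two-dimensional Lie
subalgebra `h` of `g_θ` equals `{0} × ℝ²` (the nilradical). -/
theorem two_dim_subalgebra_is_nilradical (l : ℝ) (θ : Matrix (Fin 2) (Fin 2) ℝ)
    (hθ : θ = !![l, -1; 1, l])
    (h : Submodule ℝ (ℝ × (Fin 2 → ℝ)))
    (hbr : ∀ x ∈ h, ∀ y ∈ h, br θ x y ∈ h)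
    (hdim : Module.finrank ℝ h = 2) :
    h = (⊥ : Submodule ℝ ℝ).prod (⊤ : Submodule ℝ (Fin 2 → ℝ)) := by
  have key : ∀ x ∈ h, x.1 = 0 := by
    by_contra hc
    push_neg at hc
    obtain ⟨x, hx, hx1⟩ := hc
    set z : ℝ × (Fin 2 → ℝ) := (x.1)⁻¹ • x with hz
    have hzh : z ∈ h := h.smul_mem _ hx
    have hz1 : z.1 = 1 := by simp [hz, inv_mul_cancel₀ hx1]
    have hspan : ¬ h ≤ Submodule.span ℝ {z} := by
      intro hle
      have h2 := Submodule.finrank_mono hle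
      have h1 : Module.finrank ℝ (Submodule.span ℝ ({z} : Set (ℝ × (Fin 2 → ℝ)))) ≤ 1 := by
        simpa using finrank_span_le_card ({z} : Set (ℝ × (Fin 2 → ℝ)))
      omega
    obtain ⟨y, hy, hyz⟩ := Set.not_subset.mp fun hsub => hspan fun a ha => hsub ha
    set w : ℝ × (Fin 2 → ℝ) := y - y.1 • z with hw
    have hwh : w ∈ h := h.sub_mem hy (h.smul_mem _ hzh)
    have hw1 : w.1 = 0 := by simp [hw, hz1]
    have hwne : w ≠ 0 := by
      intro h0
      apply hyz
      have : y = y.1 • z := sub_eq_zero.mp h0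
      rw [this]
      exact Submodule.smul_mem _ _ (Submodule.mem_span_singleton_self z)
    -- z, w span h
    have hzw_le : Submodule.span ℝ {z, w} ≤ h := by
      rw [Submodule.span_le]
      rintro a (rfl | rfl) <;> simpa using ‹_›
    have hindep : LinearIndependent ℝ ![z, w] := by
      rw [LinearIndependent.pair_iff]
      intro s t hst
      have h1 : s * z.1 + t * w.1 = 0 := by
        have := congrArg Prod.fst hst
        simpa using this
      rw [hz1, hw1] at h1
      have hs : s = 0 := by simpa using h1
      subst hs
      simp at hst
      rcases hst with h' | h'
      · exact ⟨rfl, h'⟩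
      · exact absurd h' hwne
    have hfr : Module.finrank ℝ (Submodule.span ℝ ({z, w} : Set (ℝ × (Fin 2 → ℝ)))) = 2 := by
      have hr : Set.range ![z, w] = {z, w} := by
        simp [Matrix.range_cons, Matrix.range_empty, Set.pair_comm]
      have := finrank_span_eq_card hindep
      rw [hr] at this
      simpa using this
    have heq : Submodule.span ℝ ({z, w} : Set (ℝ × (Fin 2 → ℝ))) = h :=
      Submodule.eq_of_le_of_finrank_eq hzw_le (by rw [hfr, hdim])
    -- bracket
    have hbrk : br θ z w ∈ h := hbr z hzh w hwh
    have hbrv : br θ z w = (0, θ.mulVec w.2) := by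
      simp [br, hz1, hw1]
    rw [hbrv, ← heq] at hbrk
    rw [Submodule.mem_span_pair] at hbrk
    obtain ⟨a, b, hab⟩ := hbrk
    have ha0 : a = 0 := by
      have := congrArg Prod.fst hab
      simpa [hz1, hw1] using this
    subst ha0
    have h2 : b • w.2 = θ.mulVec w.2 := by
      have := congrArg Prod.snd hab
      simpa using this
    have : w.2 = 0 := no_real_eigenvector l b w.2 (by rw [← hθ]; exact h2.symm)
    exact hwne (Prod.ext hw1 this)
  -- conclude
  apply Submodule.eq_of_le_of_finrank_eq
  · intro a ha
    exact ⟨key a ha, trivial⟩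
  · rw [hdim]
    have hr : (⊥ : Submodule ℝ ℝ).prod (⊤ : Submodule ℝ (Fin 2 → ℝ)) =
        LinearMap.range (LinearMap.inr ℝ ℝ (Fin 2 → ℝ)) := by
      ext a
      simp [Submodule.mem_prod, LinearMap.mem_range, Prod.ext_iff, eq_comm]
    rw [hr, LinearMap.finrank_range_of_inj LinearMap.inr_injective]
    simp
end
end

section
/- Let θ be a 2×2 real matrix, D* : ℝ² → ℝ² a linear map with D* ∘ θ = θ ∘ D*, and ξ ∈ ℝ². Then the set F := {(t,v) ∈ G_θ : D*v = −Λ_t ξ} is a subgroup of G_θ: it contains the identity (0,0), is closed under the group multiplication, and is closed under inversion. (F is the set of singularities of the linear vector field X(t,v) = (0, D*v + Λ_tξ) on G_θ.) -/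
open Matrix intervalIntegral

noncomputable section

attribute [local instance] Matrix.linftyOpNormedAddCommGroup Matrix.linftyOpNormedSpace

/-- `Λ_s = ∫₀ˢ exp(uθ) du`. -/
def Lam (θ : Matrix (Fin 2) (Fin 2) ℝ) (s : ℝ) : Matrix (Fin 2) (Fin 2) ℝ :=
  ∫ u in (0:ℝ)..s, expm (u • θ)

/-- Multiplication of the group `G_θ = ℝ ×_ρ ℝ²`. -/
def gmul (θ : Matrix (Fin 2) (Fin 2) ℝ) (p q : ℝ × (Fin 2 → ℝ)) : ℝ × (Fin 2 → ℝ) :=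
  (p.1 + q.1, p.2 + (expm (p.1 • θ)).mulVec q.2)

/-- Inversion of the group `G_θ`: `(t,v)⁻¹ = (−t, −exp(−tθ)v)`. -/
def ginv (θ : Matrix (Fin 2) (Fin 2) ℝ) (p : ℝ × (Fin 2 → ℝ)) : ℝ × (Fin 2 → ℝ) :=
  (-p.1, -(expm ((-p.1) • θ)).mulVec p.2)

attribute [local instance] Matrix.linftyOpNormedRing Matrix.linftyOpNormedAlgebra

lemma expm_continuous (θ : Matrix (Fin 2) (Fin 2) ℝ) :
    Continuous fun u : ℝ => expm (u • θ) :=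
  NormedSpace.exp_continuous.comp (continuous_id.smul continuous_const)

lemma expm_intble (θ : Matrix (Fin 2) (Fin 2) ℝ) (a b : ℝ) :
    @IntervalIntegrable _ _ NormedAddGroup.toENormedAddMonoid (fun u : ℝ => expm (u • θ)) MeasureTheory.volume a b :=
  (expm_continuous θ).intervalIntegrable a b

lemma expm_add (θ : Matrix (Fin 2) (Fin 2) ℝ) (a b : ℝ) :
    expm ((a + b) • θ) = expm (a • θ) * expm (b • θ) := by
  rw [add_smul]
  exact NormedSpace.exp_add_of_commute (((Commute.refl θ).smul_left a).smul_right b)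

lemma Lam_zero (θ : Matrix (Fin 2) (Fin 2) ℝ) : Lam θ 0 = 0 :=
  intervalIntegral.integral_same

lemma Lam_add (θ : Matrix (Fin 2) (Fin 2) ℝ) (t s : ℝ) :
    Lam θ (t + s) = Lam θ t + expm (t • θ) * Lam θ s := by
  have h1 : Lam θ (t + s) = Lam θ t + ∫ u in t..(t + s), expm (u • θ) := by
    rw [Lam, Lam,
      ← intervalIntegral.integral_add_adjacent_intervals (expm_intble θ 0 t)
        (expm_intble θ t (t + s))]
  have h2 : (∫ u in t..(t + s), expm (u • θ)) = ∫ w in (0:ℝ)..s, expm ((w + t) • θ) := by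
    rw [intervalIntegral.integral_comp_add_right (fun u => expm (u • θ)) t, zero_add,
      add_comm s t]
  have h3 : (∫ w in (0:ℝ)..s, expm ((w + t) • θ)) = expm (t • θ) * Lam θ s := by
    have : (fun w : ℝ => expm ((w + t) • θ)) = fun w => expm (t • θ) * expm (w • θ) := by
      funext w
      rw [add_comm, expm_add]
    rw [this]
    exact (ContinuousLinearMap.mul ℝ (Matrix (Fin 2) (Fin 2) ℝ)
      (expm (t • θ))).intervalIntegral_comp_comm (expm_intble θ 0 s)
  rw [h1, h2, h3]

lemma Lam_neg (θ : Matrix (Fin 2) (Fin 2) ℝ) (t : ℝ) :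
    Lam θ (-t) = -(expm ((-t) • θ) * Lam θ t) := by
  have h := Lam_add θ (-t) t
  rw [neg_add_cancel, Lam_zero] at h
  exact eq_neg_of_add_eq_zero_left h.symm

lemma Dstar_comm_expm (θ Dstar : Matrix (Fin 2) (Fin 2) ℝ)
    (hcomm : Dstar * θ = θ * Dstar) (t : ℝ) :
    Dstar * expm (t • θ) = expm (t • θ) * Dstar :=
  ((Commute.smul_right hcomm t).exp_right)

/-- Let `D* : ℝ² → ℝ²` be a linear map commuting with `θ` and `ξ ∈ ℝ²`.  The
set `F = {(t,v) : D*v = −Λ_t ξ}` of singularities of the linear vector field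
`X(t,v) = (0, D*v + Λ_tξ)` is a subgroup of `G_θ`: it contains the identity, and is closed under
multiplication and inversion. -/
theorem singularities_subgroup (θ Dstar : Matrix (Fin 2) (Fin 2) ℝ)
    (hcomm : Dstar * θ = θ * Dstar) (ξ : Fin 2 → ℝ) :
    ((0, 0) : ℝ × (Fin 2 → ℝ)) ∈ {p : ℝ × (Fin 2 → ℝ) | Dstar.mulVec p.2 = -(Lam θ p.1).mulVec ξ} ∧
    (∀ p ∈ {p : ℝ × (Fin 2 → ℝ) | Dstar.mulVec p.2 = -(Lam θ p.1).mulVec ξ},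
      ∀ q ∈ {p : ℝ × (Fin 2 → ℝ) | Dstar.mulVec p.2 = -(Lam θ p.1).mulVec ξ},
        gmul θ p q ∈ {p : ℝ × (Fin 2 → ℝ) | Dstar.mulVec p.2 = -(Lam θ p.1).mulVec ξ}) ∧
    (∀ p ∈ {p : ℝ × (Fin 2 → ℝ) | Dstar.mulVec p.2 = -(Lam θ p.1).mulVec ξ},
      ginv θ p ∈ {p : ℝ × (Fin 2 → ℝ) | Dstar.mulVec p.2 = -(Lam θ p.1).mulVec ξ}) := by
  refine ⟨?_, ?_, ?_⟩
  · simp [Lam_zero]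
  · rintro ⟨t, v⟩ hp ⟨s, w⟩ hq
    simp only [Set.mem_setOf_eq] at hp hq ⊢
    have hD : Dstar.mulVec ((expm (t • θ)).mulVec w)
        = (expm (t • θ)).mulVec (Dstar.mulVec w) := by
      rw [Matrix.mulVec_mulVec, Matrix.mulVec_mulVec, Dstar_comm_expm θ Dstar hcomm]
    simp only [gmul, Matrix.mulVec_add, hD, hq, hp, Lam_add, Matrix.add_mulVec,
      Matrix.mulVec_neg, Matrix.mulVec_mulVec]
    abel
  · rintro ⟨t, v⟩ hp
    simp only [Set.mem_setOf_eq] at hp ⊢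
    simp only [ginv, Matrix.mulVec_neg]
    have hD : Dstar.mulVec ((expm ((-t) • θ)).mulVec v)
        = (expm ((-t) • θ)).mulVec (Dstar.mulVec v) := by
      rw [Matrix.mulVec_mulVec, Matrix.mulVec_mulVec, Dstar_comm_expm θ Dstar hcomm]
    rw [hD, hp, Lam_neg]
    simp only [Matrix.mulVec_neg, Matrix.neg_mulVec, Matrix.mulVec_mulVec, neg_neg]
end
end

section
/- Let J = [[0,−1],[1,0]] and Λ_t := ∫₀ᵗ exp(uJ) du. Then for every ξ ∈ ℝ² and every t ∈ ℝ, the Euclidean inner product satisfies ⟨Λ_t ξ, Jξ⟩ = ‖ξ‖² − ⟨exp(tJ)ξ, ξ⟩, and this quantity is nonnegative: ⟨Λ_t ξ, Jξ⟩ ≥ 0. -/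
open Matrix intervalIntegral

noncomputable section

attribute [local instance] Matrix.linftyOpNormedAddCommGroup Matrix.linftyOpNormedSpace
attribute [local instance] Matrix.linftyOpNormedRing Matrix.linftyOpNormedAlgebra

/-- Realization of `ℂ` as `2×2` real matrices, as an `ℝ`-algebra hom. -/
def cAlgHom : ℂ →ₐ[ℝ] Matrix (Fin 2) (Fin 2) ℝ where
  toFun z := !![z.re, -z.im; z.im, z.re]
  map_one' := by ext i j; fin_cases i <;> fin_cases j <;> simp [Matrix.one_apply]
  map_mul' x y := by
    ext i j
    fin_cases i <;> fin_cases j <;>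
      simp [Matrix.mul_apply, Fin.sum_univ_two, Complex.mul_re, Complex.mul_im] <;> ring_nf
  map_zero' := by ext i j; fin_cases i <;> fin_cases j <;> simp
  map_add' x y := by ext i j; fin_cases i <;> fin_cases j <;> simp [Matrix.add_apply] <;> ring
  commutes' r := by
    ext i j
    fin_cases i <;> fin_cases j <;>
      simp [Matrix.algebraMap_eq_diagonal, Matrix.diagonal, Matrix.of_apply]

lemma cAlgHom_continuous : Continuous cAlgHom := by
  apply continuous_matrix
  intro i j
  fin_cases i <;> fin_cases j <;>
    simp [cAlgHom] <;> fun_prop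

lemma exp_tJ (t : ℝ) :
    expm (t • !![0, -1; 1, 0]) = !![Real.cos t, -Real.sin t; Real.sin t, Real.cos t] := by
  have h1 : (t • !![0, -1; 1, 0] : Matrix (Fin 2) (Fin 2) ℝ) = cAlgHom ((t : ℂ) * Complex.I) := by
    ext i j
    fin_cases i <;> fin_cases j <;> simp [cAlgHom]
  rw [expm, h1]
  refine (NormedSpace.map_exp cAlgHom cAlgHom_continuous ((t : ℂ) * Complex.I)).symm.trans ?_
  rw [← Complex.exp_eq_exp_ℂ]
  ext i j
  fin_cases i <;> fin_cases j <;> simp [cAlgHom]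

lemma Lam_eq (t : ℝ) :
    Lam !![0, -1; 1, 0] t
      = !![Real.sin t, -(1 - Real.cos t); 1 - Real.cos t, Real.sin t] := by
  have h : Lam !![0, -1; 1, 0] t
      = ∫ u in (0:ℝ)..t,
          (Real.cos u • (1 : Matrix (Fin 2) (Fin 2) ℝ) + Real.sin u • !![0, -1; 1, 0]) := by
    rw [Lam]
    congr 1
    ext u i j
    rw [exp_tJ]
    fin_cases i <;> fin_cases j <;> simp [Matrix.one_apply]
  rw [h, intervalIntegral.integral_add, intervalIntegral.integral_smul_const,
    intervalIntegral.integral_smul_const, integral_cos, integral_sin]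
  · ext i j
    fin_cases i <;> fin_cases j <;> simp [Matrix.one_apply]
  · exact ((Real.continuous_cos.smul continuous_const)).intervalIntegrable _ _
  · exact ((Real.continuous_sin.smul continuous_const)).intervalIntegrable _ _

/-- Let `J = [[0,−1],[1,0]]` and `Λ_t = ∫₀ᵗ exp(uJ) du`.  For every `ξ ∈ ℝ²`
and `t ∈ ℝ`, `⟨Λ_tξ, Jξ⟩ = ‖ξ‖² − ⟨exp(tJ)ξ, ξ⟩ ≥ 0`, where `⟨·,·⟩` is the Euclidean inner
product. -/
theorem rotation_barrier (ξ : Fin 2 → ℝ) (t : ℝ) :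
    ((Lam !![0, -1; 1, 0] t).mulVec ξ) ⬝ᵥ ((!![0, -1; 1, 0] : Matrix (Fin 2) (Fin 2) ℝ).mulVec ξ)
        = ξ ⬝ᵥ ξ - ((expm (t • !![0, -1; 1, 0])).mulVec ξ) ⬝ᵥ ξ ∧
    0 ≤ ((Lam !![0, -1; 1, 0] t).mulVec ξ) ⬝ᵥ
        ((!![0, -1; 1, 0] : Matrix (Fin 2) (Fin 2) ℝ).mulVec ξ) := by
  rw [Lam_eq, exp_tJ]
  simp [Matrix.mulVec, dotProduct, Fin.sum_univ_two]
  constructor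
  · ring
  · nlinarith [Real.cos_le_one t, sq_nonneg (ξ 0), sq_nonneg (ξ 1)]
end
end

section
/- Let λ ∈ ℝ with λ ≠ 0, θ := [[λ,−1],[1,λ]] (which is invertible), Λ_t := (exp(tθ) − 1)θ⁻¹, and let ζ ∈ ℝ² with ζ ≠ 0. Then the set {s·Λ_t ζ : t ∈ ℝ, s > 0} equals all of ℝ²; i.e., the spiral t ↦ Λ_t ζ meets every ray from the origin. -/
open Matrix

noncomputable section

namespace SpiralAux

open Complex

/-- The embedding of `ℂ` into real `2 × 2` matrices. -/
noncomputable def cm : ℂ →ₐ[ℝ] Matrix (Fin 2) (Fin 2) ℝ where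
  toFun z := !![z.re, -z.im; z.im, z.re]
  map_one' := by
    ext i j; fin_cases i <;> fin_cases j <;> simp [Matrix.one_apply]
  map_mul' z w := by
    ext i j
    fin_cases i <;> fin_cases j <;>
      simp [Matrix.mul_apply, Fin.sum_univ_two, Complex.mul_re, Complex.mul_im] <;> ring
  map_zero' := by
    ext i j; fin_cases i <;> fin_cases j <;> simp
  map_add' z w := by
    ext i j; fin_cases i <;> fin_cases j <;> simp <;> ring
  commutes' r := by
    ext i j
    fin_cases i <;> fin_cases j <;>
      simp [Matrix.algebraMap_matrix_apply]

lemma cm_apply (z : ℂ) : cm z = !![z.re, -z.im; z.im, z.re] := rfl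

lemma cm_continuous : Continuous cm :=
  cm.toLinearMap.continuous_of_finiteDimensional

lemma cm_exp (z : ℂ) : NormedSpace.exp (cm z) = cm (Complex.exp z) := by
  letI : SeminormedRing (Matrix (Fin 2) (Fin 2) ℝ) := Matrix.linftyOpSemiNormedRing
  letI : NormedRing (Matrix (Fin 2) (Fin 2) ℝ) := Matrix.linftyOpNormedRing
  letI : NormedAlgebra ℝ (Matrix (Fin 2) (Fin 2) ℝ) := Matrix.linftyOpNormedAlgebra
  refine (NormedSpace.map_exp cm cm_continuous z).symm.trans ?_
  congr 1
  rw [Complex.exp_eq_exp_ℂ]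

lemma cm_mulVec (w : ℂ) (v : Fin 2 → ℝ) :
    (cm w).mulVec v = ![(w * (v 0 + v 1 * I)).re, (w * (v 0 + v 1 * I)).im] := by
  funext i
  fin_cases i <;>
    simp [cm_apply, Matrix.mulVec, dotProduct, Fin.sum_univ_two,
      Complex.mul_re, Complex.mul_im] <;> ring

/-- Key lemma, positive `l` case. -/
lemma key_pos (l : ℝ) (hl : 0 < l) (u : ℂ) (hu : u ≠ 0) :
    ∃ t r : ℝ, 0 < r ∧ Complex.exp (t * (l + I)) = 1 + r * u := by
  have hπ : (0:ℝ) < Real.pi := Real.pi_pos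
  obtain ⟨n, hn⟩ := exists_nat_ge ((1/l + 3*Real.pi/2)/(2*Real.pi))
  set α := u.arg with hα
  set ρ := ‖u‖ with hρdef
  have hρ : 0 < ρ := norm_pos_iff.mpr hu
  set m : ℝ := (n : ℝ) * (2*Real.pi) with hm
  have hm' : 1/l + 3*Real.pi/2 ≤ m := by
    rw [div_le_iff₀ (by positivity)] at hn
    linarith
  set lo : ℝ := α + m - Real.pi/2 with hlodef
  set hi : ℝ := α + m + Real.pi/2 with hhidef
  have hαlo : -Real.pi < α := Complex.neg_pi_lt_arg u
  have hαhi : α ≤ Real.pi := Complex.arg_le_pi u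
  have hlo1 : 1/l ≤ lo := by rw [hlodef]; linarith
  have hllo : 1 ≤ l * lo := by
    have h1 := mul_le_mul_of_nonneg_left hlo1 hl.le
    rwa [mul_one_div, div_self hl.ne'] at h1
  have hexplo : 2 ≤ Real.exp (l * lo) :=
    le_trans (by linarith) (Real.add_one_le_exp (l * lo))
  set h : ℝ → ℝ := fun t => Real.exp (l*t) * Real.sin (t - α) + Real.sin α with hh
  have hlo_le_hi : lo ≤ hi := by rw [hlodef, hhidef]; linarith
  have hcont : ContinuousOn h (Set.Icc lo hi) := by
    apply Continuous.continuousOn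
    fun_prop
  have hlosin : Real.sin (lo - α) = -1 := by
    have he : lo - α = (n:ℝ) * (2*Real.pi) - Real.pi/2 := by rw [hlodef, hm]; ring
    rw [he, Real.sin_sub_pi_div_two, Real.cos_nat_mul_two_pi]
  have hhisin : Real.sin (hi - α) = 1 := by
    have he : hi - α = (n:ℝ) * (2*Real.pi) + Real.pi/2 := by rw [hhidef, hm]; ring
    rw [he, Real.sin_add_pi_div_two, Real.cos_nat_mul_two_pi]
  have hhlo : h lo ≤ 0 := by
    have : h lo = Real.exp (l * lo) * (-1) + Real.sin α := by rw [hh]; simp [hlosin]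
    rw [this]
    nlinarith [Real.sin_le_one α]
  have hhhi : 0 ≤ h hi := by
    have : h hi = Real.exp (l * hi) + Real.sin α := by rw [hh]; simp [hhisin]
    rw [this]
    have hle : Real.exp (l * lo) ≤ Real.exp (l * hi) :=
      Real.exp_le_exp.mpr (mul_le_mul_of_nonneg_left hlo_le_hi hl.le)
    nlinarith [Real.neg_one_le_sin α]
  obtain ⟨t, htmem, ht0⟩ := intermediate_value_Icc hlo_le_hi hcont ⟨hhlo, hhhi⟩
  rw [Set.mem_Icc] at htmem
  set E := Real.exp (l * t) with hE
  have hE2 : 2 ≤ E := by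
    have h1 : l * lo ≤ l * t := mul_le_mul_of_nonneg_left htmem.1 hl.le
    exact le_trans hexplo (Real.exp_le_exp.mpr h1)
  have hEs : E * Real.sin (t - α) = -Real.sin α := by
    have h1 : E * Real.sin (t - α) + Real.sin α = 0 := ht0
    linarith
  have hcnn : 0 ≤ Real.cos (t - α) := by
    have heq : t - α = (t - α - m) + (n:ℝ) * (2*Real.pi) := by rw [hm]; ring
    rw [heq, Real.cos_add_nat_mul_two_pi]
    apply Real.cos_nonneg_of_mem_Icc
    constructor
    · have := htmem.1; rw [hlodef] at this; linarith
    · have := htmem.2; rw [hhidef] at this; linarith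
  have hpyth := Real.sin_sq_add_cos_sq (t - α)
  have hpyth2 := Real.sin_sq_add_cos_sq α
  have hsq : (E * Real.cos (t - α))^2 = E^2 - Real.sin α^2 := by
    have h2 : (E * Real.sin (t - α))^2 = Real.sin α^2 := by rw [hEs]; ring
    linear_combination E^2 * hpyth - h2
  have hEcos : Real.cos α < E * Real.cos (t - α) := by
    nlinarith [Real.cos_le_one α, Real.neg_one_le_cos α,
      mul_nonneg (by linarith : (0:ℝ) ≤ E) hcnn, Real.neg_one_le_sin α, Real.sin_le_one α]
  refine ⟨t, (E * Real.cos (t - α) - Real.cos α) / ρ, div_pos (by linarith) hρ, ?_⟩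
  set r : ℝ := (E * Real.cos (t - α) - Real.cos α) / ρ with hrdef
  have hrρ : r * ρ = E * Real.cos (t - α) - Real.cos α := div_mul_cancel₀ _ hρ.ne'
  have hcos : Real.cos t = Real.cos (t-α) * Real.cos α - Real.sin (t-α) * Real.sin α := by
    conv_lhs => rw [show t = (t - α) + α by ring]
    exact Real.cos_add _ _
  have hsin : Real.sin t = Real.sin (t-α) * Real.cos α + Real.cos (t-α) * Real.sin α := by
    conv_lhs => rw [show t = (t - α) + α by ring]
    exact Real.sin_add _ _
  have hre : E * Real.cos t = 1 + r * (ρ * Real.cos α) := by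
    rw [hcos]
    linear_combination (-(Real.sin α)) * hEs + (-(Real.cos α)) * hrρ + hpyth2
  have him : E * Real.sin t = r * (ρ * Real.sin α) := by
    rw [hsin]
    linear_combination Real.cos α * hEs + (-(Real.sin α)) * hrρ
  have hure : u.re = ρ * Real.cos α := by
    rw [hα, Complex.cos_arg hu, hρdef]
    field_simp [norm_ne_zero_iff.mpr hu]
  have huim : u.im = ρ * Real.sin α := by
    rw [hα, Complex.sin_arg u, hρdef]
    field_simp [norm_ne_zero_iff.mpr hu]
  have h1 : ((t:ℂ) * ((l:ℂ) + I)).re = l * t := by simp; ring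
  have h2 : ((t:ℂ) * ((l:ℂ) + I)).im = t := by simp
  apply Complex.ext
  · rw [Complex.exp_re, h1, h2, ← hE]
    simp only [Complex.add_re, Complex.one_re, Complex.mul_re, Complex.ofReal_re,
      Complex.ofReal_im]
    rw [hure]
    rw [hre]; ring
  · rw [Complex.exp_im, h1, h2, ← hE]
    simp only [Complex.add_im, Complex.one_im, Complex.mul_im, Complex.ofReal_re,
      Complex.ofReal_im]
    rw [huim]
    rw [him]; ring

/-- Key lemma: the spiral `t ↦ exp (t(l+i))` meets the ray `1 + ℝ₊ u`. -/
lemma key (l : ℝ) (hl : l ≠ 0) (u : ℂ) (hu : u ≠ 0) :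
    ∃ t r : ℝ, 0 < r ∧ Complex.exp (t * (l + I)) = 1 + r * u := by
  rcases hl.lt_or_gt with h | h
  · obtain ⟨t, r, hr, he⟩ := key_pos (-l) (by linarith) ((starRingEnd ℂ) u) (by simpa)
    refine ⟨-t, r, hr, ?_⟩
    have harg : (starRingEnd ℂ) ((t : ℂ) * ((-l : ℝ) + I)) = (-t : ℝ) * ((l : ℝ) + I) := by
      simp only [_root_.map_mul, _root_.map_add, Complex.conj_ofReal, Complex.conj_I]
      push_cast
      ring
    have := congrArg (starRingEnd ℂ) he
    rw [← Complex.exp_conj, harg] at this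
    rw [this]
    simp only [_root_.map_add, _root_.map_mul, _root_.map_one, Complex.conj_ofReal,
      Complex.conj_conj]
  · exact key_pos l h u hu

/-- Complex form of the main statement. -/
lemma main_complex (l : ℝ) (hl : l ≠ 0) (z : ℂ) (hz : z ≠ 0) (X : ℂ) :
    ∃ t s : ℝ, 0 < s ∧ X = s * ((Complex.exp (t * (l + I)) - 1) * (l + I)⁻¹ * z) := by
  have hli : (l : ℂ) + I ≠ 0 := by
    intro h
    have := congrArg Complex.im h
    simp at this
  by_cases hX : X = 0
  · exact ⟨0, 1, one_pos, by simp [hX]⟩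
  · obtain ⟨t, r, hr, he⟩ := key l hl (((l : ℂ) + I) * X / z) (by
      simp [div_eq_zero_iff, mul_eq_zero, hli, hX, hz])
    refine ⟨t, r⁻¹, by positivity, ?_⟩
    rw [he]
    have hr0 : (r : ℂ) ≠ 0 := by exact_mod_cast hr.ne'
    push_cast
    field_simp
    ring
end SpiralAux

/-- Let `λ ≠ 0`, `θ = [[λ,−1],[1,λ]]` (which is invertible), and
`Λ_t = (exp(tθ) − 1)θ⁻¹`.  For every `ζ ≠ 0`, the set `{s·Λ_tζ : t ∈ ℝ, s > 0}` is all of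
`ℝ²`: the spiral `t ↦ Λ_tζ` meets every ray from the origin. -/
theorem spiral_covers_plane (l : ℝ) (hl : l ≠ 0) (ζ : Fin 2 → ℝ) (hζ : ζ ≠ 0) :
    IsUnit (!![l, -1; 1, l] : Matrix (Fin 2) (Fin 2) ℝ) ∧
    {x : Fin 2 → ℝ | ∃ (t s : ℝ), 0 < s ∧
        x = s • ((expm (t • !![l, -1; 1, l]) - 1) * (!![l, -1; 1, l])⁻¹).mulVec ζ}
      = Set.univ := by
  open SpiralAux Complex in
  have hθ : (!![l, -1; 1, l] : Matrix (Fin 2) (Fin 2) ℝ) = cm ((l : ℂ) + I) := by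
    rw [cm_apply]; norm_num
  have hli : (l : ℂ) + I ≠ 0 := by
    intro h
    have := congrArg Complex.im h
    simp at this
  have hunit : IsUnit (!![l, -1; 1, l] : Matrix (Fin 2) (Fin 2) ℝ) := by
    rw [Matrix.isUnit_iff_isUnit_det, Matrix.det_fin_two_of, isUnit_iff_ne_zero]
    intro h
    nlinarith [sq_nonneg l]
  refine ⟨hunit, ?_⟩
  have hinv : (!![l, -1; 1, l] : Matrix (Fin 2) (Fin 2) ℝ)⁻¹ = cm (((l : ℂ) + I)⁻¹) := by
    apply Matrix.inv_eq_right_inv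
    rw [hθ, ← _root_.map_mul, mul_inv_cancel₀ hli, _root_.map_one]
  have hz : (ζ 0 : ℂ) + (ζ 1 : ℂ) * I ≠ 0 := by
    intro h
    apply hζ
    have h0 := congrArg Complex.re h
    have h1 := congrArg Complex.im h
    simp at h0 h1
    funext i
    fin_cases i <;> simpa
  ext x
  simp only [Set.mem_setOf_eq, Set.mem_univ, iff_true]
  obtain ⟨t, s, hs, hX⟩ := main_complex l hl _ hz ((x 0 : ℂ) + (x 1 : ℂ) * I)
  refine ⟨t, s, hs, ?_⟩
  have hsm : t • cm ((l:ℂ) + I) = cm ((t : ℂ) * ((l:ℂ) + I)) := by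
    rw [_root_.map_mul, show ((t:ℂ)) = algebraMap ℝ ℂ t from rfl, cm.commutes,
      ← Algebra.smul_def]
  have hmat : (expm (t • !![l, -1; 1, l]) - 1) * (!![l, -1; 1, l])⁻¹
      = cm ((Complex.exp ((t : ℂ) * ((l : ℂ) + I)) - 1) * ((l : ℂ) + I)⁻¹) := by
    rw [hinv, hθ, hsm, show expm (cm ((t:ℂ) * ((l:ℂ) + I)))
        = cm (Complex.exp ((t:ℂ) * ((l:ℂ) + I))) from cm_exp _,
      ← _root_.map_one cm, ← map_sub, ← _root_.map_mul]
  rw [hmat, cm_mulVec]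
  have h0 := congrArg Complex.re hX
  have h1 := congrArg Complex.im hX
  simp [Complex.mul_re, Complex.mul_im] at h0 h1
  funext i
  fin_cases i <;> simp [Complex.mul_re, Complex.mul_im] <;> linarith
end
end

section
/- Let θ be a 2×2 real matrix, D* : ℝ² → ℝ² an invertible linear map with D* ∘ θ = θ ∘ D*, and ξ ∈ ℝ². Define π : G_θ → ℝ² by π(t,v) = exp(−tθ)D*v − Λ_{−t}ξ, set F_s := ∫₀ˢ exp(uD*) du, and let φ_s(t,v) = (t, exp(sD*)v + F_sΛ_tξ). Then for every s ∈ ℝ the semiconjugacy π ∘ φ_s = exp(sD*) ∘ π holds; i.e., the flow of the linear vector field X(t,v) = (0, D*v + Λ_tξ) projects under π to the linear flow of D* on the homogeneous space F\G_θ ≅ ℝ². -/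
open Matrix intervalIntegral

noncomputable section

attribute [local instance] Matrix.linftyOpNormedAddCommGroup Matrix.linftyOpNormedSpace

/-- The projection `π(t,v) = exp(−tθ)D*v − Λ_{−t}ξ` of `G_θ` onto `F\G_θ ≅ ℝ²`. -/
def proj (θ Dstar : Matrix (Fin 2) (Fin 2) ℝ) (ξ : Fin 2 → ℝ) (p : ℝ × (Fin 2 → ℝ)) :
    Fin 2 → ℝ :=
  (expm ((-p.1) • θ)).mulVec (Dstar.mulVec p.2) - (Lam θ (-p.1)).mulVec ξ

/-- The flow `φ_s(t,v) = (t, exp(sD*)v + F_sΛ_tξ)` of the linear vector field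
`X(t,v) = (0, D*v + Λ_tξ)`, where `F_s = ∫₀ˢ exp(uD*) du = Lam Dstar s`. -/
def flow (θ Dstar : Matrix (Fin 2) (Fin 2) ℝ) (ξ : Fin 2 → ℝ) (s : ℝ)
    (p : ℝ × (Fin 2 → ℝ)) : ℝ × (Fin 2 → ℝ) :=
  (p.1, (expm (s • Dstar)).mulVec p.2 + ((Lam Dstar s) * (Lam θ p.1)).mulVec ξ)

set_option maxHeartbeats 1000000

attribute [local instance] Matrix.linftyOpNormedRing Matrix.linftyOpNormedAlgebra

abbrev Mat2 := Matrix (Fin 2) (Fin 2) ℝ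

def mulL (A : Mat2) : Mat2 →L[ℝ] Mat2 := ContinuousLinearMap.mul ℝ Mat2 A

def mulR (A : Mat2) : Mat2 →L[ℝ] Mat2 := (ContinuousLinearMap.mul ℝ Mat2).flip A

lemma mulL_apply (A B : Mat2) : mulL A B = A * B := rfl
lemma mulR_apply (A B : Mat2) : mulR A B = B * A := rfl

lemma expm_cont (θ : Mat2) : Continuous (fun u : ℝ => expm (u • θ)) :=
  NormedSpace.exp_continuous.comp (continuous_id.smul continuous_const)

lemma lam_mulR (A B : Mat2) (s : ℝ) :
    Lam A s * B = ∫ u in (0:ℝ)..s, expm (u • A) * B := by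
  have h := ContinuousLinearMap.intervalIntegral_comp_comm (mulR B)
    ((expm_cont A).intervalIntegrable (μ := MeasureTheory.volume) (0:ℝ) s)
  rw [Lam]; exact h.symm

lemma lam_mulL (A B : Mat2) (s : ℝ) :
    B * Lam A s = ∫ u in (0:ℝ)..s, B * expm (u • A) := by
  have h := ContinuousLinearMap.intervalIntegral_comp_comm (mulL B)
    ((expm_cont A).intervalIntegrable (μ := MeasureTheory.volume) (0:ℝ) s)
  rw [Lam]; exact h.symm

lemma lam_mul (A : Mat2) (s : ℝ) : Lam A s * A = expm (s • A) - 1 := by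
  have h : ∀ u ∈ Set.uIcc (0:ℝ) s,
      HasDerivAt (fun u : ℝ => expm (u • A)) (expm (u • A) * A) u := fun u _ =>
    hasDerivAt_exp_smul_const A u
  have hint :=
    ((expm_cont A).mul (continuous_const (y := A))).intervalIntegrable (μ := MeasureTheory.volume) 0 s
  have heq := intervalIntegral.integral_eq_sub_of_hasDerivAt h hint
  rw [show expm ((0:ℝ) • A) = 1 by simp [expm, NormedSpace.exp_zero]] at heq
  rw [lam_mulR, heq]

lemma lam_comm {A B : Mat2} (h : Commute A B) (s : ℝ) : Commute (Lam A s) B := by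
  show Lam A s * B = B * Lam A s
  rw [lam_mulR, lam_mulL]
  exact intervalIntegral.integral_congr fun u _ =>
    ((h.smul_left u).exp_left).eq

lemma expm_mul_lam (θ : Mat2) (t : ℝ) :
    expm ((-t) • θ) * Lam θ t = - Lam θ (-t) := by
  rw [lam_mulL]
  have h1 : ∀ u : ℝ, expm ((-t) • θ) * expm (u • θ) = expm ((u - t) • θ) := by
    intro u
    rw [expm, expm, expm]; erw [← NormedSpace.exp_add_of_commute
      (((Commute.refl θ).smul_left (-t)).smul_right u)]
    congr 1
    module
  simp_rw [h1]
  rw [intervalIntegral.integral_comp_sub_right (fun u => expm (u • θ)) t, zero_sub, sub_self,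
    intervalIntegral.integral_symm, Lam]

/-- Let `D*` be invertible and commute with `θ`, and `ξ ∈ ℝ²`.  Then for every
`s`, the semiconjugacy `π ∘ φ_s = exp(sD*) ∘ π` holds: the flow of the linear vector field
`X(t,v) = (0, D*v + Λ_tξ)` projects under `π` to the linear flow of `D*` on `F\G_θ ≅ ℝ²`. -/
theorem flow_semiconjugacy (θ Dstar : Matrix (Fin 2) (Fin 2) ℝ)
    (hunit : IsUnit Dstar) (hcomm : Dstar * θ = θ * Dstar) (ξ : Fin 2 → ℝ) :
    ∀ (s : ℝ) (p : ℝ × (Fin 2 → ℝ)),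
      proj θ Dstar ξ (flow θ Dstar ξ s p) = (expm (s • Dstar)).mulVec (proj θ Dstar ξ p) := by
  intro s p
  obtain ⟨t, v⟩ := p
  have hC : Commute Dstar θ := hcomm
  have hTE : Commute (expm (s • Dstar)) (expm ((-t) • θ)) := by
    rw [expm, expm]
    exact (((hC.smul_left s).smul_right (-t)).exp)
  have hDE : Commute Dstar (expm (s • Dstar)) := by
    rw [expm]
    exact (((Commute.refl Dstar).smul_right s).exp_right)
  have key1 : expm ((-t) • θ) * (Dstar * expm (s • Dstar))
      = expm (s • Dstar) * (expm ((-t) • θ) * Dstar) := by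
    rw [hDE.eq, ← mul_assoc, ← hTE.eq, mul_assoc]
  have key2 : expm ((-t) • θ) * (Dstar * (Lam Dstar s * Lam θ t))
      = Lam θ (-t) - expm (s • Dstar) * Lam θ (-t) := by
    have hMD : Lam Dstar s * Dstar = Dstar * Lam Dstar s :=
      (lam_comm (Commute.refl Dstar) s).eq
    have h2 : Dstar * (Lam Dstar s * Lam θ t) = (expm (s • Dstar) - 1) * Lam θ t := by
      rw [← mul_assoc, ← hMD, lam_mul]
    rw [h2, ← mul_assoc,
      show expm ((-t) • θ) * (expm (s • Dstar) - 1) = (expm (s • Dstar) - 1) * expm ((-t) • θ) by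
        rw [mul_sub, sub_mul, ← hTE.eq, mul_one, one_mul],
      mul_assoc, expm_mul_lam, mul_neg, sub_mul, one_mul, neg_sub]
  simp only [proj, flow, Matrix.mulVec_add, Matrix.mulVec_sub, Matrix.mulVec_mulVec, mul_assoc]
  rw [key1, key2, Matrix.sub_mulVec]
  abel
end
end
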